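/- Let G be a weak Roman graph, i.e. γ_r(G) = 2·γ(G), and let H be a graph with γ_r(H) = 2. Then γ_r(G∘H) = 2·γ(G). -/

import Mathlib

open Finset
open scoped Classical

/-- The lexicographic product of two simple graphs. -/
def lexProd {α β : Type*} (G : SimpleGraph α) (H : SimpleGraph β) :
    SimpleGraph (α × β) where
  Adj p q := G.Adj p.1 q.1 ∨ (p.1 = q.1 ∧ H.Adj p.2 q.2)
  symm := by
    constructor
    rintro ⟨a, b⟩ ⟨c, d⟩ (h | ⟨h1, h2⟩)
    · exact Or.inl h.symm
    · exact Or.inr ⟨h1.symm, h2.symm⟩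
  loopless := by
    constructor
    rintro ⟨a, b⟩ (h | ⟨h1, h2⟩)
    · exact G.irrefl h
    · exact H.irrefl h2

/-- A vertex `w` is undefended with respect to `g` if `g w = 0` and `g x = 0`
for every neighbour `x` of `w`. -/
def Undefended {α : Type*} (G : SimpleGraph α) (g : α → ℕ) (w : α) : Prop :=
  g w = 0 ∧ ∀ x, G.Adj w x → g x = 0

/-- A weak Roman dominating function. -/
def IsWRDF {α : Type*} (G : SimpleGraph α) (f : α → ℕ) : Prop :=
  (∀ v, f v ≤ 2) ∧
    ∀ v, f v = 0 → ∃ u, G.Adj u v ∧ 1 ≤ f u ∧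
      ∀ w, ¬ Undefended G (Function.update (Function.update f v 1) u (f u - 1)) w

/-- The weak Roman domination number. -/
noncomputable def weakRomanNumber {α : Type*} (G : SimpleGraph α) [Fintype α] : ℕ :=
  sInf {k | ∃ f : α → ℕ, IsWRDF G f ∧ ∑ v, f v = k}

/-- A dominating set. -/
def IsDomSet {α : Type*} (G : SimpleGraph α) (D : Finset α) : Prop :=
  ∀ v ∉ D, ∃ u ∈ D, G.Adj u v

/-- The domination number. -/
noncomputable def domNumber {α : Type*} (G : SimpleGraph α) [Fintype α] : ℕ :=
  sInf {k | ∃ D : Finset α, IsDomSet G D ∧ D.card = k}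

/-- A total dominating set. -/
def IsTotalDomSet {α : Type*} (G : SimpleGraph α) (S : Finset α) : Prop :=
  ∀ v, ∃ u ∈ S, G.Adj u v

/-- The total domination number. -/
noncomputable def totalDomNumber {α : Type*} (G : SimpleGraph α) [Fintype α] : ℕ :=
  sInf {k | ∃ S : Finset α, IsTotalDomSet G S ∧ S.card = k}

/-- A double total dominating set: every vertex has at least two neighbours in `S`. -/
def IsDoubleTotalDomSet {α : Type*} (G : SimpleGraph α) (S : Finset α) : Prop :=
  ∀ v, ∃ u₁ ∈ S, ∃ u₂ ∈ S, u₁ ≠ u₂ ∧ G.Adj u₁ v ∧ G.Adj u₂ v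

/-- The double total domination number. -/
noncomputable def doubleTotalDomNumber {α : Type*} (G : SimpleGraph α) [Fintype α] : ℕ :=
  sInf {k | ∃ S : Finset α, IsDoubleTotalDomSet G S ∧ S.card = k}

/-- A 2-packing: the closed neighbourhoods of distinct members are disjoint. -/
def IsTwoPacking {α : Type*} (G : SimpleGraph α) (X : Finset α) : Prop :=
  ∀ u ∈ X, ∀ v ∈ X, u ≠ v →
    ∀ w, ¬ ((w = u ∨ G.Adj u w) ∧ (w = v ∨ G.Adj v w))

/-- The 2-packing number. -/
noncomputable def twoPackingNumber {α : Type*} (G : SimpleGraph α) [Fintype α] : ℕ :=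
  sSup {k | ∃ X : Finset α, IsTwoPacking G X ∧ X.card = k}

/-- A secure dominating set. -/
def IsSecureDomSet {α : Type*} (G : SimpleGraph α) (S : Finset α) : Prop :=
  IsDomSet G S ∧ ∀ v ∉ S, ∃ u ∈ S, G.Adj u v ∧ IsDomSet G (insert v (S.erase u))

/-- The secure domination number. -/
noncomputable def secureDomNumber {α : Type*} (G : SimpleGraph α) [Fintype α] : ℕ :=
  sInf {k | ∃ S : Finset α, IsSecureDomSet G S ∧ S.card = k}

/-- The corona product of two graphs. -/
def corona {α β : Type*} (G₁ : SimpleGraph α) (G₂ : SimpleGraph β) :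
    SimpleGraph (α ⊕ α × β) where
  Adj x y :=
    match x, y with
    | .inl a, .inl a' => G₁.Adj a a'
    | .inl a, .inr p => a = p.1
    | .inr p, .inl a => p.1 = a
    | .inr p, .inr q => p.1 = q.1 ∧ G₂.Adj p.2 q.2
  symm := by
    constructor
    rintro (a | p) (a' | q) h
    · exact h.symm
    · exact h.symm
    · exact h.symm
    · exact ⟨h.1.symm, h.2.symm⟩
  loopless := by
    constructor
    rintro (a | p) h
    · exact G₁.irrefl h
    · exact G₂.irrefl h.2


lemma updupd_ne {γ : Type*} {inst : DecidableEq γ} (f : γ → ℕ) (p d : γ) (x1 v1 : ℕ) (a : γ)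
    (h1 : a ≠ p) (h2 : a ≠ d) :
    (@Function.update _ _ inst (@Function.update _ _ inst f p x1) d v1) a = f a := by
  rw [Function.update_of_ne h2, Function.update_of_ne h1]

lemma updupd_same {γ : Type*} {inst : DecidableEq γ} (f : γ → ℕ) (p d : γ) (x1 v1 : ℕ) :
    (@Function.update _ _ inst (@Function.update _ _ inst f p x1) d v1) d = v1 := by
  rw [Function.update_self]

lemma prod_ne_fst {γ δ : Type*} {a x : γ} {b y : δ} (h : a ≠ x) : (a, b) ≠ (x, y) :=
  fun hh => h (congrArg Prod.fst hh)

lemma prod_ne_snd {γ δ : Type*} {a x : γ} {b y : δ} (h : b ≠ y) : (a, b) ≠ (x, y) :=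
  fun hh => h (congrArg Prod.snd hh)

lemma lower_wrdf {α β : Type*} [Fintype α] [Fintype β] [Nonempty β]
    (G : SimpleGraph α) (H : SimpleGraph β) (f : α × β → ℕ)
    (hf : IsWRDF (lexProd G H) f) :
    IsWRDF G (fun u => min 2 (∑ v, f (u, v))) := by
  constructor
  · intro u; exact min_le_left _ _
  intro u hu
  simp only at hu
  have hcol : ∀ b, f (u, b) = 0 := by
    have h0 : ∑ v, f (u, v) = 0 := by
      rcases Nat.min_eq_zero_iff.mp hu with h | h
      · omega
      · exact h
    intro b
    exact Finset.sum_eq_zero_iff.mp h0 b (Finset.mem_univ b)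
  obtain ⟨v⟩ := ‹Nonempty β›
  obtain ⟨⟨x, y₀⟩, hadj, hfx, hnd⟩ := hf.2 (u, v) (hcol v)
  have hGxu : G.Adj x u := by
    rcases hadj with h | ⟨h1, h2⟩
    · exact h
    · exfalso; subst h1; simp only [hcol] at hfx; omega
  have hxu : x ≠ u := G.ne_of_adj hGxu
  have hcx1 : 1 ≤ ∑ b, f (x, b) :=
    le_trans hfx (Finset.single_le_sum (f := fun b => f (x, b)) (fun _ _ => Nat.zero_le _)
      (Finset.mem_univ y₀))
  refine ⟨x, hGxu, le_min one_le_two hcx1, ?_⟩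
  intro w hw
  obtain ⟨hw0, hwn⟩ := hw
  set f₁ : α → ℕ := fun u => min 2 (∑ v, f (u, v)) with hf₁
  set g' : α → ℕ := Function.update (Function.update f₁ u 1) x (f₁ x - 1) with hg'
  have hg'u : g' u = 1 := by
    rw [hg', Function.update_of_ne (Ne.symm hxu), Function.update_self]
  have hwu : w ≠ u := fun h => by rw [h, hg'u] at hw0; omega
  have hwx : w ≠ x := by
    intro h
    have := hwn u (h ▸ hGxu)
    rw [hg'u] at this; omega
  have hg'w : ∑ b, f (w, b) = 0 := by
    have : g' w = f₁ w := by
      rw [hg', Function.update_of_ne hwx, Function.update_of_ne hwu]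
    rw [this] at hw0
    rcases Nat.min_eq_zero_iff.mp hw0 with h | h
    · omega
    · exact h
  have hwcol : ∀ b, f (w, b) = 0 := fun b =>
    Finset.sum_eq_zero_iff.mp hg'w b (Finset.mem_univ b)
  apply hnd (w, v)
  constructor
  · rw [updupd_ne f (u, v) (x, y₀) _ _ _ (prod_ne_fst hwu) (prod_ne_fst hwx)]
    exact hwcol v
  · rintro ⟨a, b⟩ (hGwa | ⟨rfl, hHvb⟩) <;> dsimp only at *
    · -- G.Adj w a
      have hga : g' a = 0 := hwn a hGwa
      have hau : a ≠ u := fun h => by rw [h, hg'u] at hga; omega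
      by_cases hax : a = x
      · -- column x: f₁ x = 1
        subst hax
        have hfa : f₁ a - 1 = 0 := by
          rw [hg', Function.update_self] at hga; exact hga
        have hcxeq : ∑ b, f (a, b) = 1 := by
          have h1 : 1 ≤ f₁ a := le_min one_le_two hcx1
          have h2 : f₁ a = 1 := by omega
          rw [hf₁] at h2; simp only at h2
          rcases le_or_gt 2 (∑ b, f (a, b)) with h | h
          · rw [min_eq_left h] at h2; omega
          · omega
        have herase : ∑ b ∈ Finset.univ.erase y₀, f (a, b) = 0 := by
          have := Finset.sum_erase_add Finset.univ (fun b => f (a, b)) (Finset.mem_univ y₀)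
          omega
        by_cases hby : b = y₀
        · subst hby
          rw [updupd_same]
          have h3 := Finset.sum_erase_add Finset.univ (fun b' => f (a, b')) (Finset.mem_univ b)
          omega
        · rw [updupd_ne f (u, v) (a, y₀) _ _ _ (prod_ne_fst hau) (prod_ne_snd hby)]
          exact Finset.sum_eq_zero_iff.mp herase b (Finset.mem_erase.mpr ⟨hby, Finset.mem_univ b⟩)
      · -- other column: f₁ a = 0
        have hcol0 : ∑ b, f (a, b) = 0 := by
          have h4 : g' a = f₁ a := by
            rw [hg', Function.update_of_ne hax, Function.update_of_ne hau]
          rw [h4] at hga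
          rcases Nat.min_eq_zero_iff.mp hga with h | h
          · omega
          · exact h
        rw [updupd_ne f (u, v) (x, y₀) _ _ _ (prod_ne_fst hau) (prod_ne_fst hax)]
        exact Finset.sum_eq_zero_iff.mp hcol0 b (Finset.mem_univ b)
    · -- same column as w
      rw [updupd_ne f (u, v) (x, y₀) _ _ _ (prod_ne_fst hwu) (prod_ne_fst hwx)]
      exact hwcol b
lemma updupd_mid {γ : Type*} {inst : DecidableEq γ} (f : γ → ℕ) (p d : γ) (x1 v1 : ℕ)
    (h : p ≠ d) :
    (@Function.update _ _ inst (@Function.update _ _ inst f p x1) d v1) p = x1 := by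
  rw [Function.update_of_ne h, Function.update_self]

lemma exists_one_le_of_sum {β : Type*} [Fintype β] (g : β → ℕ) (h : 1 ≤ ∑ v, g v) :
    ∃ v, 1 ≤ g v := by
  by_contra hc
  push_neg at hc
  simp only [Nat.lt_one_iff] at hc
  rw [Finset.sum_eq_zero (fun v _ => hc v)] at h
  omega

lemma col_eq {α β : Type*} {instp : DecidableEq (α × β)} {instb : DecidableEq β}
    (F : α × β → ℕ) (g : β → ℕ) (u : α) (hcol : ∀ b, F (u, b) = g b) (v y₀ : β)
    (hvy : v ≠ y₀) (b : β) :
    (@Function.update _ _ instp (@Function.update _ _ instp F (u, v) 1) (u, y₀)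
        (F (u, y₀) - 1)) (u, b)
      = (@Function.update _ _ instb (@Function.update _ _ instb g v 1) y₀ (g y₀ - 1)) b := by
  by_cases h1 : b = y₀
  · subst h1
    rw [Function.update_self, Function.update_self, hcol]
  by_cases h2 : b = v
  · subst h2
    rw [Function.update_of_ne (prod_ne_snd h1), Function.update_self,
      Function.update_of_ne h1, Function.update_self]
  · rw [Function.update_of_ne (prod_ne_snd h1), Function.update_of_ne (prod_ne_snd h2),
      Function.update_of_ne h1, Function.update_of_ne h2, hcol]

lemma upper_wrdf {α β : Type*} [Fintype α] [Fintype β]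
    (G : SimpleGraph α) (H : SimpleGraph β) (D : Finset α) (hD : IsDomSet G D)
    (g : β → ℕ) (hg : IsWRDF H g) (hsum : ∑ v, g v = 2) :
    IsWRDF (lexProd G H) (fun p => if p.1 ∈ D then g p.2 else 0) := by
  have hex : ∃ b, 1 ≤ g b := exists_one_le_of_sum g (by omega)
  constructor
  · rintro ⟨u, v⟩
    dsimp only
    split_ifs
    · exact hg.1 v
    · omega
  rintro ⟨u, v⟩ hp
  dsimp only at hp
  by_cases huD : u ∈ D
  · -- u ∈ D
    rw [if_pos huD] at hp
    obtain ⟨y₀, hady, hy₀, hnd⟩ := hg.2 v hp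
    have hvy : v ≠ y₀ := fun h => (H.irrefl (v := v)) (h ▸ hady)
    have hcolu : ∀ b, (fun p : α × β => if p.1 ∈ D then g p.2 else 0) (u, b) = g b := by
      intro b; simp [huD]
    refine ⟨(u, y₀), Or.inr ⟨rfl, hady⟩, ?_, ?_⟩
    · dsimp only; rw [if_pos huD]; exact hy₀
    rintro ⟨x, y⟩ ⟨h0, hall⟩
    by_cases hxu : x = u
    · -- column u : contradict hnd y
      subst hxu
      apply hnd y
      rw [col_eq _ g x hcolu v y₀ hvy y] at h0
      refine ⟨h0, ?_⟩
      intro b' hb'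
      have := hall (x, b') (Or.inr ⟨rfl, hb'⟩)
      rwa [col_eq _ g x hcolu v y₀ hvy b'] at this
    by_cases hxD : x ∈ D
    · -- another D-column
      by_cases hgy : 1 ≤ g y
      · rw [updupd_ne _ (u, v) (u, y₀) _ _ _ (prod_ne_fst hxu) (prod_ne_fst hxu)] at h0
        simp [hxD] at h0
        omega
      · obtain ⟨y', hady', hy', _⟩ := hg.2 y (by omega)
        have := hall (x, y') (Or.inr ⟨rfl, hady'.symm⟩)
        rw [updupd_ne _ (u, v) (u, y₀) _ _ _ (prod_ne_fst hxu) (prod_ne_fst hxu)] at this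
        simp [hxD] at this
        omega
    · -- x ∉ D
      obtain ⟨z, hzD, hGzx⟩ := hD x hxD
      by_cases hzu : z = u
      · subst hzu
        have := hall (z, v) (Or.inl hGzx.symm)
        rw [updupd_mid _ (z, v) (z, y₀) _ _ (prod_ne_snd hvy)] at this
        omega
      · obtain ⟨b, hb⟩ := id hex
        have := hall (z, b) (Or.inl hGzx.symm)
        rw [updupd_ne _ (u, v) (u, y₀) _ _ _ (prod_ne_fst hzu) (prod_ne_fst hzu)] at this
        simp [hzD] at this
        omega
  · -- u ∉ D
    obtain ⟨z, hzD, hGzu⟩ := hD u huD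
    have huz : u ≠ z := fun h => huD (h ▸ hzD)
    obtain ⟨y₀, hy₀⟩ := id hex
    refine ⟨(z, y₀), Or.inl hGzu, ?_, ?_⟩
    · dsimp only; rw [if_pos hzD]; exact hy₀
    rintro ⟨x, y⟩ ⟨h0, hall⟩
    -- key : every D column has a positive vertex after the move
    have hK1 : ∀ a ∈ D, ∃ b, ¬ (@Function.update (α × β) (fun _ => ℕ)
        (fun a b => Classical.propDecidable (a = b))
        (@Function.update (α × β) (fun _ => ℕ) (fun a b => Classical.propDecidable (a = b))
          (fun p : α × β => if p.1 ∈ D then g p.2 else 0) (u, v) 1) (z, y₀)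
        ((fun p : α × β => if p.1 ∈ D then g p.2 else 0) (z, y₀) - 1)) (a, b) = 0 := by
      intro a haD
      have hau : a ≠ u := fun h => huD (h ▸ haD)
      by_cases haz : a = z
      · subst haz
        by_cases hgy2 : 2 ≤ g y₀
        · refine ⟨y₀, ?_⟩
          rw [updupd_same]
          simp [haD]
          omega
        · -- g y₀ = 1, find another positive vertex
          have herase : ∑ b ∈ Finset.univ.erase y₀, g b = 1 := by
            have := Finset.sum_erase_add Finset.univ g (Finset.mem_univ y₀)
            omega
          have : ∃ b ∈ Finset.univ.erase y₀, g b ≠ 0 := by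
            apply Finset.exists_ne_zero_of_sum_ne_zero
            omega
          obtain ⟨b, hbmem, hb⟩ := this
          have hbne : b ≠ y₀ := (Finset.mem_erase.mp hbmem).1
          refine ⟨b, ?_⟩
          rw [updupd_ne _ (u, v) (a, y₀) _ _ _ (prod_ne_fst hau) (prod_ne_snd hbne)]
          simp [haD]
          omega
      · obtain ⟨b, hb⟩ := id hex
        refine ⟨b, ?_⟩
        rw [updupd_ne _ (u, v) (z, y₀) _ _ _ (prod_ne_fst hau) (prod_ne_fst haz)]
        simp [haD]
        omega
    by_cases hxz : x = z
    · subst hxz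
      have := hall (u, v) (Or.inl hGzu)
      rw [updupd_mid _ (u, v) (x, y₀) _ _ (prod_ne_fst huz)] at this
      omega
    by_cases hxD : x ∈ D
    · have hxu : x ≠ u := fun h => huD (h ▸ hxD)
      by_cases hgy : 1 ≤ g y
      · rw [updupd_ne _ (u, v) (z, y₀) _ _ _ (prod_ne_fst hxu) (prod_ne_fst hxz)] at h0
        simp [hxD] at h0
        omega
      · obtain ⟨y', hady', hy', _⟩ := hg.2 y (by omega)
        have := hall (x, y') (Or.inr ⟨rfl, hady'.symm⟩)
        rw [updupd_ne _ (u, v) (z, y₀) _ _ _ (prod_ne_fst hxu) (prod_ne_fst hxz)] at this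
        simp [hxD] at this
        omega
    · obtain ⟨z', hz'D, hGz'x⟩ := hD x hxD
      obtain ⟨b, hb⟩ := hK1 z' hz'D
      exact hb (hall (z', b) (Or.inl hGz'x.symm))
lemma hone_wrdf {γ : Type*} (K : SimpleGraph γ) : IsWRDF K (fun _ => 1) :=
  ⟨fun _ => one_le_two, fun _ h => absurd h (by simp)⟩

/-- If `G` is a weak Roman graph (`γ_r(G) = 2γ(G)`) and
`γ_r(H) = 2`, then `γ_r(G∘H) = 2γ(G)`. -/
theorem weakRoman_lexProd_of_weakRomanGraph {α β : Type*} [Fintype α] [Fintype β]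
    (G : SimpleGraph α) (H : SimpleGraph β)
    (hG : weakRomanNumber G = 2 * domNumber G)
    (hH : weakRomanNumber H = 2) :
    weakRomanNumber (lexProd G H) = 2 * domNumber G := by
  have hHne : {k | ∃ f : β → ℕ, IsWRDF H f ∧ ∑ v, f v = k}.Nonempty :=
    ⟨_, fun _ => 1, hone_wrdf H, rfl⟩
  obtain ⟨g, hg, hgsum⟩ : ∃ g : β → ℕ, IsWRDF H g ∧ ∑ v, g v = 2 := by
    have := Nat.sInf_mem hHne
    rw [show sInf {k | ∃ f : β → ℕ, IsWRDF H f ∧ ∑ v, f v = k} = weakRomanNumber H from rfl,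
      hH] at this
    obtain ⟨g, hg', hg2⟩ := this
    exact ⟨g, hg', hg2⟩
  have hβ : Nonempty β := by
    by_contra hb
    rw [not_nonempty_iff] at hb
    rw [Finset.univ_eq_empty, Finset.sum_empty] at hgsum
    omega
  have hDne : {k | ∃ D : Finset α, IsDomSet G D ∧ D.card = k}.Nonempty :=
    ⟨_, Finset.univ, fun v hv => absurd (Finset.mem_univ v) hv, rfl⟩
  obtain ⟨D, hD, hDcard⟩ : ∃ D : Finset α, IsDomSet G D ∧ D.card = domNumber G :=
    Nat.sInf_mem hDne
  apply le_antisymm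
  · -- upper bound
    have hwt : ∑ p : α × β, (if p.1 ∈ D then g p.2 else 0) = 2 * D.card := by
      rw [Fintype.sum_prod_type]
      have : ∀ u : α, ∑ v : β, (if u ∈ D then g v else 0) = if u ∈ D then 2 else 0 := by
        intro u
        by_cases h : u ∈ D <;> simp [h, hgsum]
      rw [Finset.sum_congr rfl (fun u _ => this u), Finset.sum_ite_mem, Finset.univ_inter,
        Finset.sum_const, smul_eq_mul, mul_comm]
    have := Nat.sInf_le (s := {k | ∃ f : α × β → ℕ, IsWRDF (lexProd G H) f ∧ ∑ v, f v = k})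
      ⟨_, upper_wrdf G H D hD g hg hgsum, hwt⟩
    rw [← hDcard]
    exact this
  · -- lower bound
    have hPne : {k | ∃ f : α × β → ℕ, IsWRDF (lexProd G H) f ∧ ∑ v, f v = k}.Nonempty :=
      ⟨_, fun _ => 1, hone_wrdf _, rfl⟩
    obtain ⟨f, hf, hfsum⟩ : ∃ f : α × β → ℕ, IsWRDF (lexProd G H) f ∧
        ∑ v, f v = weakRomanNumber (lexProd G H) := Nat.sInf_mem hPne
    have h1 : weakRomanNumber G ≤ ∑ u : α, min 2 (∑ v : β, f (u, v)) :=
      Nat.sInf_le ⟨_, lower_wrdf G H f hf, rfl⟩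
    have h2 : ∑ u : α, min 2 (∑ v : β, f (u, v)) ≤ ∑ p : α × β, f p := by
      rw [Fintype.sum_prod_type]
      exact Finset.sum_le_sum (fun u _ => min_le_right _ _)
    rw [← hG]
    calc weakRomanNumber G ≤ ∑ p : α × β, f p := le_trans h1 h2
      _ = weakRomanNumber (lexProd G H) := hfsum
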